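/- For every n ≥ 0, the polynomial a_n ∈ ℚ[g₂,g₃] is weighted-homogeneous of weight n+2 when g₂ is given weight 4 and g₃ weight 6; equivalently, under the ℚ-algebra endomorphism of ℚ[g₂,g₃,t] sending g₂ ↦ t⁴g₂ and g₃ ↦ t⁶g₃, the image of a_n equals t^{n+2}·a_n. -/

import Mathlib

/-!
STATEMENT 0: There exists a unique family `(aₙ)` of elements of `ℚ[g₂,g₃]` such that
`℘ := p⁻² + Σ_{n≥0} aₙ pⁿ ∈ ℚ[g₂,g₃]((p))` satisfies `(℘′)² = 4℘³ − g₂℘ − g₃`.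
-/

noncomputable section

/-- The polynomial ring `ℚ[g₂, g₃]`, with `g₂ = X 0` and `g₃ = X 1`. -/
abbrev RQ : Type := MvPolynomial (Fin 2) ℚ

/-- The variable `g₂`. -/
def gTwo : RQ := MvPolynomial.X 0

/-- The variable `g₃`. -/
def gThree : RQ := MvPolynomial.X 1

/-- The derivation `d/dp` on the ring of formal Laurent series `ℚ[g₂,g₃]((p))`. -/
def lsDeriv (f : LaurentSeries RQ) : LaurentSeries RQ where
  coeff n := (n + 1 : ℤ) • f.coeff (n + 1)
  isPWO_support' := by
    have h : Function.support (fun n : ℤ => (n + 1 : ℤ) • f.coeff (n + 1)) ⊆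
        (fun n : ℤ => n - 1) '' f.support := by
      intro n hn
      refine ⟨n + 1, ?_, by ring⟩
      intro h0
      apply hn
      simp only [Function.mem_support, not_not] at *
      rw [h0, smul_zero]
    exact (f.isPWO_support.image_of_monotone
      (fun a b hab => sub_le_sub_right hab 1)).mono h

/-- The formal Laurent series `℘ := p⁻² + Σ_{n≥0} aₙ pⁿ` attached to
a family `(aₙ)` of elements of `ℚ[g₂,g₃]`. -/
def wp (a : ℕ → RQ) : LaurentSeries RQ :=
  HahnSeries.single (-2 : ℤ) (1 : RQ) +
    HahnSeries.ofPowerSeries ℤ RQ (PowerSeries.mk a)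

/-- The inclusion `ℚ[g₂,g₃] → ℚ[g₂,g₃,t]` (with `t = X 2`). -/
def incl3 : MvPolynomial (Fin 2) ℚ →ₐ[ℚ] MvPolynomial (Fin 3) ℚ :=
  MvPolynomial.rename (Fin.castSucc)

/-- The `ℚ`-algebra endomorphism of `ℚ[g₂,g₃,t]` sending `g₂ ↦ t⁴g₂`, `g₃ ↦ t⁶g₃`
and `t ↦ t`. -/
def scaleEndo : MvPolynomial (Fin 3) ℚ →ₐ[ℚ] MvPolynomial (Fin 3) ℚ :=
  MvPolynomial.aeval
    ![(MvPolynomial.X 2) ^ 4 * MvPolynomial.X 0,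
      (MvPolynomial.X 2) ^ 6 * MvPolynomial.X 1,
      MvPolynomial.X 2]

namespace WeierAux

open PowerSeries

/-- The key power-series equation. -/
def Eqn {S : Type*} [CommRing S] (b c : S) (F : S⟦X⟧) : Prop :=
  (X ^ 3 * derivative S F - 2) ^ 2 =
    4 * (1 + X ^ 2 * F) ^ 3 - C b * (X ^ 4 * (1 + X ^ 2 * F))
      - C c * X ^ 6

variable {S : Type*} [CommRing S]

lemma nat_unit_cancel [Algebra ℚ S] {k : ℕ} (hk : k ≠ 0) {x : S}
    (h : (k : S) * x = 0) : x = 0 := by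
  have hu : IsUnit (k : S) := by
    have h1 : algebraMap ℚ S (k : ℚ) = (k : S) := by rw [map_natCast]
    rw [← h1]
    exact IsUnit.map _ (isUnit_iff_ne_zero.2 (by exact_mod_cast hk))
  exact (hu.mul_right_eq_zero).mp h

lemma coeff_mul_lower_vanish (f g : S⟦X⟧) (n : ℕ)
    (h : ∀ m < n, coeff m f = 0) :
    coeff n (f * g) = coeff n f * coeff 0 g := by
  rw [coeff_mul]
  apply Finset.sum_eq_single_of_mem (n, 0) (Finset.HasAntidiagonal.mem_antidiagonal.2 (by simp))
  rintro ⟨i, j⟩ hij hne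
  have hij' : i + j = n := Finset.HasAntidiagonal.mem_antidiagonal.mp hij
  have hi : i < n := by
    by_contra hlt
    have h1 : i = n := by omega
    have h2 : j = 0 := by omega
    exact hne (by simp [h1, h2])
  rw [h i hi, zero_mul]

/-- Uniqueness of the solution of the equation. -/
lemma eqn_unique [Algebra ℚ S] {b c : S} {F G : S⟦X⟧}
    (hF : Eqn b c F) (hG : Eqn b c G) : F = G := by
  set P := derivative S F with hP
  set Q := derivative S G with hQ
  set A : S⟦X⟧ := X ^ 3 * (P + Q) - 4 with hA
  set B : S⟦X⟧ := 4 * ((1 + X ^ 2 * F) ^ 2 + (1 + X ^ 2 * F) * (1 + X ^ 2 * G)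
      + (1 + X ^ 2 * G) ^ 2) - C b * X ^ 4 with hB
  rw [Eqn] at hF hG
  have key : X ^ 3 * ((P - Q) * A) = X ^ 2 * ((F - G) * B) := by
    rw [hA, hB]
    linear_combination hF - hG
  have hA0 : coeff 0 A = -4 := by
    simp [hA, coeff_zero_eq_constantCoeff, map_sub, map_mul, map_pow, map_ofNat]
  have hB0 : coeff 0 B = 12 := by
    simp [hB, coeff_zero_eq_constantCoeff, map_sub, map_mul, map_pow, map_add, map_ofNat]
    norm_num
  have main : ∀ n : ℕ, coeff n (F - G) = 0 := by
    intro n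
    induction n using Nat.strong_induction_on with
    | _ n ih =>
      cases n with
      | zero =>
        have h2 := congrArg (coeff 2) key
        rw [coeff_X_pow_mul' _ 3 2, if_neg (by norm_num),
            coeff_X_pow_mul' _ 2 2, if_pos (by norm_num)] at h2
        simp only [show (2:ℕ) - 2 = 0 from rfl] at h2
        rw [coeff_mul_lower_vanish _ _ 0 (fun m hm => absurd hm (Nat.not_lt_zero m)),
            hB0] at h2
        exact nat_unit_cancel (k := 12) (by norm_num)
          (by linear_combination -h2)
      | succ n =>
        have h2 := congrArg (coeff (n + 3)) key
        rw [coeff_X_pow_mul' _ 3 (n + 3), if_pos (by omega),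
            coeff_X_pow_mul' _ 2 (n + 3), if_pos (by omega)] at h2
        have e1 : n + 3 - 3 = n := by omega
        have e2 : n + 3 - 2 = n + 1 := by omega
        rw [e1, e2] at h2
        have hPQ : ∀ m < n, coeff m (P - Q) = 0 := by
          intro m hm
          rw [map_sub, hP, hQ, coeff_derivative, coeff_derivative,
            ← sub_mul, ← map_sub, ih (m + 1) (by omega), zero_mul]
        rw [coeff_mul_lower_vanish _ _ n hPQ, hA0,
            coeff_mul_lower_vanish _ _ (n + 1) (fun m hm => ih m (by omega)), hB0] at h2
        rw [map_sub, hP, hQ, coeff_derivative, coeff_derivative, ← sub_mul,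
            ← map_sub] at h2
        apply nat_unit_cancel (k := 4 * n + 16) (by omega)
        push_cast at h2 ⊢
        linear_combination -h2
  ext n
  have hn := main n
  rw [map_sub, sub_eq_zero] at hn
  exact hn

lemma rescale_C' (t b : S) : rescale t (C b) = C b := by
  ext n
  rw [coeff_rescale]
  cases n with
  | zero => simp
  | succ n => simp [coeff_C]

/-- Rescaling a solution. -/
lemma eqn_rescale {b c : S} {F : S⟦X⟧} (t : S) (h : Eqn b c F) :
    Eqn (t ^ 4 * b) (t ^ 6 * c) (C (t ^ 2) * rescale t F) := by
  have h2 := congrArg (rescale t) h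
  simp only [map_sub, map_add, map_mul, map_pow, map_one, map_ofNat, rescale_X,
    rescale_C'] at h2
  rw [Eqn]
  have hd : derivative S (C (t ^ 2) * rescale t F) =
      C (t ^ 3) * rescale t (derivative S F) := by
    ext n
    rw [coeff_derivative, coeff_C_mul, coeff_rescale, coeff_C_mul, coeff_rescale,
      coeff_derivative]
    ring
  rw [hd, map_mul, map_mul]
  rw [show C (t ^ 4) = C t ^ 4 from map_pow _ _ _,
      show C (t ^ 6) = C t ^ 6 from map_pow _ _ _,
      show C (t ^ 3) = C t ^ 3 from map_pow _ _ _,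
      show C (t ^ 2) = C t ^ 2 from map_pow _ _ _]
  linear_combination h2

/-- Mapping a solution along a ring hom. -/
lemma eqn_map {T : Type*} [CommRing T] (f : S →+* T) {b c : S} {F : S⟦X⟧}
    (h : Eqn b c F) : Eqn (f b) (f c) (PowerSeries.map f F) := by
  have hd : PowerSeries.map f (derivative S F) = derivative T (PowerSeries.map f F) := by
    ext n
    rw [coeff_map, coeff_derivative, coeff_derivative, coeff_map, map_mul,
      map_add, map_natCast, map_one]
  have h2 := congrArg (PowerSeries.map f) h
  simp only [map_sub, map_add, map_mul, map_pow, map_one, map_ofNat, PowerSeries.map_X,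
    PowerSeries.map_C, hd] at h2
  rw [Eqn]
  linear_combination h2


end WeierAux

section HahnPart

open PowerSeries WeierAux

lemma lsDeriv_coeff (f : LaurentSeries RQ) (n : ℤ) :
    (lsDeriv f).coeff n = (n + 1) • f.coeff (n + 1) := rfl

lemma lsDeriv_add (f g : LaurentSeries RQ) :
    lsDeriv (f + g) = lsDeriv f + lsDeriv g := by
  ext n
  simp [lsDeriv_coeff, smul_add]

lemma lsDeriv_single (m : ℤ) (r : RQ) :
    lsDeriv (HahnSeries.single m r) = HahnSeries.single (m - 1) (m • r) := by
  ext n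
  rw [lsDeriv_coeff]
  by_cases h : n = m - 1
  · subst h
    rw [show m - 1 + 1 = m by ring, HahnSeries.coeff_single_same,
      HahnSeries.coeff_single_same]
  · rw [HahnSeries.coeff_single_of_ne (by omega), HahnSeries.coeff_single_of_ne h,
      smul_zero]

lemma ofPS_coeff_neg (f : PowerSeries RQ) (n : ℤ) (hn : n < 0) :
    (HahnSeries.ofPowerSeries ℤ RQ f).coeff n = 0 := by
  rw [HahnSeries.ofPowerSeries_apply, HahnSeries.embDomain_notin_range]
  rintro ⟨m, hm⟩
  replace hm : (m : ℤ) = n := hm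
  omega

lemma lsDeriv_ofPS (f : PowerSeries RQ) :
    lsDeriv (HahnSeries.ofPowerSeries ℤ RQ f) =
      HahnSeries.ofPowerSeries ℤ RQ (derivative RQ f) := by
  ext n
  rw [lsDeriv_coeff]
  rcases lt_trichotomy n (-1) with h | h | h
  · rw [ofPS_coeff_neg _ _ (by omega), ofPS_coeff_neg _ _ (by omega), smul_zero]
  · subst h
    rw [show (-1 : ℤ) + 1 = 0 by ring, zero_smul, ofPS_coeff_neg _ _ (by norm_num)]
  · obtain ⟨m, rfl⟩ : ∃ m : ℕ, n = (m : ℤ) := ⟨n.toNat, by omega⟩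
    rw [show ((m : ℤ) + 1) = ((m + 1 : ℕ) : ℤ) by push_cast; ring,
      HahnSeries.ofPowerSeries_apply_coeff, HahnSeries.ofPowerSeries_apply_coeff,
      coeff_derivative, zsmul_eq_mul]
    push_cast
    ring

lemma eqn_of_ha (a : ℕ → RQ)
    (ha : (lsDeriv (wp a)) ^ 2 =
      4 * (wp a) ^ 3 - (HahnSeries.C gTwo : LaurentSeries RQ) * wp a -
        (HahnSeries.C gThree : LaurentSeries RQ)) :
    Eqn gTwo gThree (PowerSeries.mk a) := by
  set F : PowerSeries RQ := PowerSeries.mk a with hF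
  set s : LaurentSeries RQ := HahnSeries.single (1 : ℤ) (1 : RQ) with hs
  set oPS := HahnSeries.ofPowerSeries ℤ RQ with hoPS
  have hpow : ∀ k : ℕ, s ^ k = HahnSeries.single (k : ℤ) (1 : RQ) := by
    intro k
    rw [hs, HahnSeries.single_pow, one_pow, nsmul_eq_mul, mul_one]
  have hW2 : wp a * s ^ 2 = 1 + s ^ 2 * oPS F := by
    rw [wp, add_mul, hpow 2, HahnSeries.single_mul_single, one_mul,
      show (-2 : ℤ) + ((2 : ℕ) : ℤ) = 0 by norm_num, HahnSeries.single_zero_one]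
    ring
  have hD3 : lsDeriv (wp a) * s ^ 3 = s ^ 3 * oPS (derivative RQ F) - 2 := by
    rw [wp, lsDeriv_add, lsDeriv_single, lsDeriv_ofPS, add_mul, hpow 3,
      HahnSeries.single_mul_single,
      show (-2 : ℤ) - 1 + ((3 : ℕ) : ℤ) = 0 by norm_num]
    have h1 : ((-2 : ℤ) • (1 : RQ) * 1) = (-2 : RQ) := by norm_num
    have h2 : HahnSeries.single (0 : ℤ) (-2 : RQ) = (-2 : LaurentSeries RQ) := by
      rw [← HahnSeries.C_apply, map_neg, map_ofNat]
    rw [h1, h2]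
    ring
  have hsX : oPS X = s := by rw [hoPS, HahnSeries.ofPowerSeries_X, hs]
  have hsC : ∀ r : RQ, oPS (C r) = HahnSeries.C r := by
    intro r
    rw [hoPS, HahnSeries.ofPowerSeries_C]
  apply HahnSeries.ofPowerSeries_injective (Γ := ℤ) (R := RQ)
  rw [← hoPS]
  simp only [map_sub, map_add, map_mul, map_pow, map_one, map_ofNat, hsX, hsC]
  linear_combination (s ^ 6) * ha -
    (lsDeriv (wp a) * s ^ 3 + (s ^ 3 * oPS (derivative RQ F) - 2)) * hD3 +
    (4 * ((wp a * s ^ 2) ^ 2 + (wp a * s ^ 2) * (1 + s ^ 2 * oPS F) +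
      (1 + s ^ 2 * oPS F) ^ 2) - HahnSeries.C gTwo * s ^ 4) * hW2

end HahnPart

/-- each `aₙ` is weighted-homogeneous of weight `n+2` for the weights
`wt g₂ = 4`, `wt g₃ = 6`: the endomorphism `g₂ ↦ t⁴g₂, g₃ ↦ t⁶g₃` of `ℚ[g₂,g₃,t]`
sends (the image of) `aₙ` to `t^{n+2}·aₙ`. -/
theorem statement2 (a : ℕ → RQ)
    (ha : (lsDeriv (wp a)) ^ 2 =
      4 * (wp a) ^ 3 - (HahnSeries.C gTwo : LaurentSeries RQ) * wp a -
        (HahnSeries.C gThree : LaurentSeries RQ)) :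
    ∀ n : ℕ,
      scaleEndo (incl3 (a n)) = (MvPolynomial.X 2) ^ (n + 2) * incl3 (a n) := by
  intro n
  have hF : WeierAux.Eqn gTwo gThree (PowerSeries.mk a) := eqn_of_ha a ha
  set t : MvPolynomial (Fin 3) ℚ := MvPolynomial.X 2 with ht
  set ψ : RQ →+* MvPolynomial (Fin 3) ℚ := incl3.toRingHom with hψ
  set φ : RQ →+* MvPolynomial (Fin 3) ℚ := scaleEndo.toRingHom.comp incl3.toRingHom with hφ
  have hG := WeierAux.eqn_map ψ hF
  have hH := WeierAux.eqn_map φ hF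
  have hg2 : φ gTwo = t ^ 4 * ψ gTwo := by
    simp [hφ, hψ, ht, incl3, scaleEndo, gTwo, MvPolynomial.rename_X,
      MvPolynomial.aeval_X]
  have hg3 : φ gThree = t ^ 6 * ψ gThree := by
    simp [hφ, hψ, ht, incl3, scaleEndo, gThree, MvPolynomial.rename_X,
      MvPolynomial.aeval_X]
  rw [hg2, hg3] at hH
  have hG1 := WeierAux.eqn_rescale t hG
  have heq := WeierAux.eqn_unique hH hG1
  have hc := congrArg (PowerSeries.coeff n) heq
  rw [PowerSeries.coeff_map, PowerSeries.coeff_C_mul, PowerSeries.coeff_rescale,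
    PowerSeries.coeff_map, PowerSeries.coeff_mk] at hc
  have hφa : φ (a n) = scaleEndo (incl3 (a n)) := rfl
  have hψa : ψ (a n) = incl3 (a n) := rfl
  rw [hφa, hψa] at hc
  rw [hc, pow_add]
  ring
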